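/- Define Ku(x,t) := ∫₀ᵗ ∫_{ℝⁿ} k(t−s) φ(x−y) u(y,s) dy ds for x ∈ ℝⁿ and t ≥ 0. Then for all x ∈ ℝⁿ and all 0 ≤ t₁ ≤ t₂: |Ku(x,t₂) − Ku(x,t₁)| ≤ ( |k(0)| + 2∫₀^∞ |k′(r)| dr ) · ‖φ‖_{L²(ℝⁿ)} · A · (t₂ − t₁). -/

import Mathlib

open Set Metric MeasureTheory ENNReal

noncomputable section

abbrev Euc (n : ℕ) := EuclideanSpace ℝ (Fin n)

/-- Cauchy–Schwarz for real-valued `L²` functions. -/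
lemma cs_aux {α : Type*} [MeasurableSpace α] {μ : Measure α} {f h : α → ℝ}
    (hf : MemLp f 2 μ) (hh : MemLp h 2 μ) :
    Integrable (fun a => f a * h a) μ ∧
    |∫ a, f a * h a ∂μ| ≤ (eLpNorm f 2 μ).toReal * (eLpNorm h 2 μ).toReal := by
  set F : Lp ℝ 2 μ := hf.toLp f with hF
  set H : Lp ℝ 2 μ := hh.toLp h with hHdef
  have hFf : (F : α → ℝ) =ᵐ[μ] f := hf.coeFn_toLp
  have hHh : (H : α → ℝ) =ᵐ[μ] h := hh.coeFn_toLp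
  have heq : (fun a => (F : α → ℝ) a * (H : α → ℝ) a) =ᵐ[μ] fun a => f a * h a :=
    hFf.mul hHh
  have hinner : Integrable (fun a => (inner ℝ ((F : α → ℝ) a) ((H : α → ℝ) a) : ℝ)) μ :=
    L2.integrable_inner (𝕜 := ℝ) F H
  have hinner' : Integrable (fun a => (F : α → ℝ) a * (H : α → ℝ) a) μ := by
    simpa [RCLike.inner_apply, starRingEnd_apply, mul_comm] using hinner
  refine ⟨hinner'.congr heq, ?_⟩
  have h1 : ∫ a, f a * h a ∂μ = (inner ℝ F H : ℝ) := by
    rw [L2.inner_def]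
    refine (integral_congr_ae ?_).symm
    filter_upwards [heq] with a ha
    simpa [RCLike.inner_apply, starRingEnd_apply, mul_comm] using ha
  rw [h1]
  calc |(inner ℝ F H : ℝ)| ≤ ‖F‖ * ‖H‖ := abs_real_inner_le_norm F H
    _ = (eLpNorm f 2 μ).toReal * (eLpNorm h 2 μ).toReal := by
        rw [hF, hHdef, Lp.norm_toLp, Lp.norm_toLp]

/-- The space–time convolution
`Ku(x,t) = ∫₀ᵗ ∫ k(t−s) φ(x−y) u(y,s) dy ds` is Lipschitz in time:
`|Ku(x,t₂) − Ku(x,t₁)| ≤ (|k(0)| + 2∫₀^∞|k′|) ‖φ‖_{L²} A (t₂ − t₁)`. -/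
theorem convolution_time_lipschitz
    {n : ℕ} (hn : 1 ≤ n) (A : ℝ) (hA : 0 ≤ A)
    (k k' : ℝ → ℝ) (hk' : IntegrableOn k' (Ioi (0:ℝ)))
    (hk : ∀ r : ℝ, 0 ≤ r → k r = k 0 + ∫ s in (0:ℝ)..r, k' s)
    (φ : Euc n → ℝ) (hφ : MemLp φ 2 volume)
    (u : Euc n → ℝ → ℝ) (hu_meas : Measurable (Function.uncurry u))
    (hu : ∀ᵐ s ∂(volume.restrict (Ioi (0:ℝ))),
      MemLp (fun y => u y s) 2 volume ∧
      eLpNorm (fun y => u y s) 2 volume ≤ ENNReal.ofReal A)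
    (Ku : Euc n → ℝ → ℝ)
    (hKu : ∀ x : Euc n, ∀ t : ℝ,
      Ku x t = ∫ s in (0:ℝ)..t, ∫ y : Euc n, k (t - s) * φ (x - y) * u y s) :
    ∀ x : Euc n, ∀ t₁ t₂ : ℝ, 0 ≤ t₁ → t₁ ≤ t₂ →
      |Ku x t₂ - Ku x t₁| ≤
        (|k 0| + 2 * ∫ r in Ioi (0:ℝ), |k' r|) * (eLpNorm φ 2 volume).toReal * A *
          (t₂ - t₁) := by
  intro x t₁ t₂ ht₁ ht12
  set I : ℝ := ∫ r in Ioi (0:ℝ), |k' r| with hIdef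
  set Cφ : ℝ := (eLpNorm φ 2 volume).toReal * A with hCφdef
  have hInn : 0 ≤ I := setIntegral_nonneg measurableSet_Ioi (fun _ _ => abs_nonneg _)
  have hCφnn : 0 ≤ Cφ := mul_nonneg ENNReal.toReal_nonneg hA
  -- the primitive of `k'` (via an indicator making it globally integrable)
  set k'' : ℝ → ℝ := (Ioi (0:ℝ)).indicator k' with hk''def
  have hk''int : Integrable k'' volume := (integrable_indicator_iff measurableSet_Ioi).2 hk'
  have hk''abs : Integrable (fun s => |k'' s|) volume := hk''int.abs
  set P : ℝ → ℝ := fun r => ∫ s in (0:ℝ)..r, k'' s with hPdef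
  set Hf : ℝ → ℝ := fun r => ∫ s in (0:ℝ)..r, |k'' s| with hHfdef
  have hPcont : Continuous P :=
    intervalIntegral.continuous_primitive (fun a b => hk''int.intervalIntegrable) 0
  have hHcont : Continuous Hf :=
    intervalIntegral.continuous_primitive (fun a b => hk''abs.intervalIntegrable) 0
  have hkP : ∀ r : ℝ, 0 ≤ r → k r = k 0 + P r := by
    intro r hr
    rw [hk r hr]
    congr 1
    show (∫ s in (0:ℝ)..r, k' s) = ∫ s in (0:ℝ)..r, k'' s
    rw [intervalIntegral.integral_of_le hr, intervalIntegral.integral_of_le hr]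
    refine setIntegral_congr_fun measurableSet_Ioc (fun s hs => ?_)
    exact (Set.indicator_of_mem (show s ∈ Ioi (0:ℝ) from hs.1) k').symm
  have hH0 : ∀ r : ℝ, 0 ≤ r → 0 ≤ Hf r := fun r hr =>
    intervalIntegral.integral_nonneg hr (fun _ _ => abs_nonneg _)
  have hHdiff : ∀ a b : ℝ, Hf b - Hf a = ∫ s in a..b, |k'' s| := fun a b =>
    intervalIntegral.integral_interval_sub_left hk''abs.intervalIntegrable
      hk''abs.intervalIntegrable
  have hHI : ∀ r : ℝ, 0 ≤ r → Hf r ≤ I := by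
    intro r hr
    have h0 : Hf r = ∫ s in Ioc (0:ℝ) r, |k'' s| := intervalIntegral.integral_of_le hr
    have h1 : ∫ s in Ioc (0:ℝ) r, |k'' s| = ∫ s in Ioc (0:ℝ) r, |k' s| :=
      setIntegral_congr_fun measurableSet_Ioc (fun s hs => by
        rw [hk''def, Set.indicator_of_mem (show s ∈ Ioi (0:ℝ) from hs.1)])
    rw [h0, h1, hIdef]
    exact setIntegral_mono_set hk'.abs
      (Filter.Eventually.of_forall fun s => abs_nonneg _)
      (HasSubset.Subset.eventuallyLE Ioc_subset_Ioi_self)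
  have hPH : ∀ r : ℝ, 0 ≤ r → |P r| ≤ Hf r := by
    intro r hr
    have := intervalIntegral.norm_integral_le_integral_norm (f := k'') (μ := volume)
      (a := 0) (b := r) hr
    simpa [Real.norm_eq_abs] using this
  have hkbound : ∀ r : ℝ, 0 ≤ r → |k r| ≤ |k 0| + I := by
    intro r hr
    rw [hkP r hr]
    calc |k 0 + P r| ≤ |k 0| + |P r| := abs_add_le _ _
      _ ≤ |k 0| + I := by linarith [hPH r hr, hHI r hr]
  have hkdiff : ∀ a b : ℝ, 0 ≤ a → a ≤ b → |k b - k a| ≤ Hf b - Hf a := by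
    intro a b ha hab
    rw [hkP a ha, hkP b (ha.trans hab)]
    have h2 : k 0 + P b - (k 0 + P a) = ∫ s in a..b, k'' s := by
      have := intervalIntegral.integral_interval_sub_left
        (hk''int.intervalIntegrable (a := 0) (b := b))
        (hk''int.intervalIntegrable (a := 0) (b := a))
      rw [show k 0 + P b - (k 0 + P a) = P b - P a by ring]
      exact this
    rw [h2, hHdiff a b]
    have := intervalIntegral.norm_integral_le_integral_norm (f := k'') (μ := volume)
      (a := a) (b := b) hab
    simpa [Real.norm_eq_abs] using this
  -- the shifted φ
  have hmp : MeasurePreserving (fun y : Euc n => x - y) volume volume :=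
    Measure.measurePreserving_sub_left volume x
  have hφxmem : MemLp (fun y : Euc n => φ (x - y)) 2 volume := hφ.comp_measurePreserving hmp
  have hφxnorm : eLpNorm (fun y : Euc n => φ (x - y)) 2 volume = eLpNorm φ 2 volume :=
    eLpNorm_comp_measurePreserving hφ.1 hmp
  -- the inner spatial integral
  set g : ℝ → ℝ := fun s => ∫ y : Euc n, φ (x - y) * u y s with hgdef
  have hgbound : ∀ᵐ s ∂(volume.restrict (Ioi (0:ℝ))), |g s| ≤ Cφ := by
    filter_upwards [hu] with s hs
    obtain ⟨hs1, hs2⟩ := hs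
    obtain ⟨hint, hle⟩ := cs_aux hφxmem hs1
    refine hle.trans ?_
    rw [hφxnorm]
    have h2 : (eLpNorm (fun y => u y s) 2 volume).toReal ≤ A := by
      have := ENNReal.toReal_mono ENNReal.ofReal_ne_top hs2
      simpa [ENNReal.toReal_ofReal hA] using this
    exact mul_le_mul_of_nonneg_left h2 ENNReal.toReal_nonneg
  -- the outer integrand
  set G : ℝ → ℝ → ℝ := fun t s => ∫ y : Euc n, k (t - s) * φ (x - y) * u y s with hGdef
  have hG : ∀ t s : ℝ, G t s = k (t - s) * g s := by
    intro t s
    rw [hGdef, hgdef]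
    simp only
    simp_rw [mul_assoc]
    exact integral_const_mul _ _
  have hKu' : ∀ t : ℝ, Ku x t = ∫ s in (0:ℝ)..t, G t s := by
    intro t; rw [hKu x t, hGdef]
  -- measurability of g on (0, t₂]
  have hgmeas : AEStronglyMeasurable g (volume.restrict (Ioc (0:ℝ) t₂)) := by
    set μ2 := volume.restrict (Ioc (0:ℝ) t₂) with hμ2
    have h1 : Measurable (fun p : ℝ × Euc n => u p.2 p.1) := hu_meas.comp measurable_swap
    have hmq : Measurable (fun p : ℝ × Euc n => x - p.2) :=
      measurable_const.sub measurable_snd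
    have hq : Measure.QuasiMeasurePreserving (fun p : ℝ × Euc n => x - p.2)
        (μ2.prod volume) volume := by
      refine ⟨hmq, ?_⟩
      have hmap : Measure.map (fun p : ℝ × Euc n => x - p.2) (μ2.prod volume)
          = (μ2 Set.univ) • (volume : Measure (Euc n)) := by
        have hmxy : Measurable (fun y : Euc n => x - y) :=
          measurable_const.sub measurable_id
        rw [show (fun p : ℝ × Euc n => x - p.2)
              = (fun y : Euc n => x - y) ∘ Prod.snd from rfl,
          ← Measure.map_map hmxy measurable_snd,
          Measure.map_snd_prod, Measure.map_smul, hmp.map_eq]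
      rw [hmap]
      exact Measure.smul_absolutelyContinuous
    have hA1 : AEStronglyMeasurable (fun p : ℝ × Euc n => φ (x - p.2)) (μ2.prod volume) := by
      have := hφ.1.comp_quasiMeasurePreserving hq
      exact this
    have hf2 : AEStronglyMeasurable (fun p : ℝ × Euc n => φ (x - p.2) * u p.2 p.1)
        (μ2.prod volume) := hA1.mul h1.aestronglyMeasurable
    exact hf2.integral_prod_right'
  -- the uniform bound on G t
  have hbd : ∀ t : ℝ, 0 ≤ t →
      ∀ᵐ s ∂(volume.restrict (Ioc (0:ℝ) t)), ‖G t s‖ ≤ (|k 0| + I) * Cφ := by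
    intro t ht0
    have h1 : ∀ᵐ s ∂(volume.restrict (Ioc (0:ℝ) t)), |g s| ≤ Cφ :=
      ae_restrict_of_ae_restrict_of_subset Ioc_subset_Ioi_self hgbound
    filter_upwards [h1, ae_restrict_mem measurableSet_Ioc] with s hs hmem
    rw [hG t s, Real.norm_eq_abs, abs_mul]
    exact mul_le_mul (hkbound _ (by linarith [hmem.2])) hs (abs_nonneg _)
      (by positivity)
  -- integrability of G t on (0, t]
  have hGint : ∀ t : ℝ, 0 ≤ t → t ≤ t₂ → IntegrableOn (G t) (Ioc (0:ℝ) t) volume := by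
    intro t ht0 htt2
    have hkm : AEStronglyMeasurable (fun s => k (t - s)) (volume.restrict (Ioc (0:ℝ) t)) := by
      have hc : Continuous fun s : ℝ => k 0 + P (t - s) :=
        continuous_const.add (hPcont.comp (continuous_const.sub continuous_id))
      refine hc.aestronglyMeasurable.congr ?_
      filter_upwards [ae_restrict_mem measurableSet_Ioc] with s hs
      exact (hkP (t - s) (by linarith [hs.2])).symm
    have hgmeas' : AEStronglyMeasurable g (volume.restrict (Ioc (0:ℝ) t)) :=
      hgmeas.mono_measure (Measure.restrict_mono (Ioc_subset_Ioc le_rfl htt2) le_rfl)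
    have hGmeas : AEStronglyMeasurable (G t) (volume.restrict (Ioc (0:ℝ) t)) := by
      refine (hkm.mul hgmeas').congr ?_
      filter_upwards with s
      exact (hG t s).symm
    exact Integrable.mono' (integrableOn_const measure_Ioc_lt_top.ne) hGmeas
      (hbd t ht0)
  have hIG2 : IntegrableOn (G t₂) (Ioc (0:ℝ) t₂) volume := hGint t₂ (ht₁.trans ht12) le_rfl
  have hIG1 : IntegrableOn (G t₁) (Ioc (0:ℝ) t₁) volume := hGint t₁ ht₁ ht12
  have i1 : IntervalIntegrable (G t₂) volume 0 t₁ :=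
    (intervalIntegrable_iff_integrableOn_Ioc_of_le ht₁).2
      (hIG2.mono_set (Ioc_subset_Ioc le_rfl ht12))
  have i2 : IntervalIntegrable (G t₂) volume t₁ t₂ :=
    (intervalIntegrable_iff_integrableOn_Ioc_of_le ht12).2
      (hIG2.mono_set (Ioc_subset_Ioc ht₁ le_rfl))
  have i3 : IntervalIntegrable (G t₁) volume 0 t₁ :=
    (intervalIntegrable_iff_integrableOn_Ioc_of_le ht₁).2 hIG1
  -- splitting
  have hsplit : Ku x t₂ - Ku x t₁ =
      (∫ s in (0:ℝ)..t₁, (G t₂ s - G t₁ s)) + ∫ s in t₁..t₂, G t₂ s := by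
    rw [hKu' t₂, hKu' t₁,
      ← intervalIntegral.integral_add_adjacent_intervals i1 i2,
      intervalIntegral.integral_sub i1 i3]
    ring
  -- second term bound
  have hT2 : |∫ s in t₁..t₂, G t₂ s| ≤ (|k 0| + I) * Cφ * (t₂ - t₁) := by
    rw [intervalIntegral.integral_of_le ht12]
    have hbnd : ∀ᵐ s ∂(volume.restrict (Ioc t₁ t₂)), ‖G t₂ s‖ ≤ (|k 0| + I) * Cφ :=
      ae_restrict_of_ae_restrict_of_subset (Ioc_subset_Ioc ht₁ le_rfl)
        (hbd t₂ (ht₁.trans ht12))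
    have := norm_setIntegral_le_of_norm_le_const_ae (μ := volume) (s := Ioc t₁ t₂)
      (f := G t₂) measure_Ioc_lt_top hbnd
    rwa [Real.volume_real_Ioc_of_le ht12, Real.norm_eq_abs] at this
  -- first term bound
  have hdiffbd : ∀ᵐ s ∂(volume.restrict (Set.uIoc (0:ℝ) t₁)),
      ‖G t₂ s - G t₁ s‖ ≤ (Hf (t₂ - s) - Hf (t₁ - s)) * Cφ := by
    rw [Set.uIoc_of_le ht₁]
    have h1 : ∀ᵐ s ∂(volume.restrict (Ioc (0:ℝ) t₁)), |g s| ≤ Cφ :=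
      ae_restrict_of_ae_restrict_of_subset Ioc_subset_Ioi_self hgbound
    filter_upwards [h1, ae_restrict_mem measurableSet_Ioc] with s hs hmem
    rw [hG t₂ s, hG t₁ s, ← sub_mul, Real.norm_eq_abs, abs_mul]
    have hd := hkdiff (t₁ - s) (t₂ - s) (by linarith [hmem.2]) (by linarith)
    exact mul_le_mul hd hs (abs_nonneg _) (by linarith [hH0 (t₂ - s) (by nlinarith [hmem.1, hmem.2, ht12]), abs_nonneg (k (t₂ - s) - k (t₁ - s)), hd])
  have hc2 : Continuous fun s : ℝ => Hf (t₂ - s) :=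
    hHcont.comp (continuous_const.sub continuous_id)
  have hc1 : Continuous fun s : ℝ => Hf (t₁ - s) :=
    hHcont.comp (continuous_const.sub continuous_id)
  have hDint : IntervalIntegrable (fun s => (Hf (t₂ - s) - Hf (t₁ - s)) * Cφ) volume 0 t₁ :=
    ((hc2.sub hc1).mul continuous_const).intervalIntegrable 0 t₁
  have hT1a : |∫ s in (0:ℝ)..t₁, (G t₂ s - G t₁ s)| ≤
      |∫ s in (0:ℝ)..t₁, (Hf (t₂ - s) - Hf (t₁ - s)) * Cφ| := by
    have := intervalIntegral.norm_integral_le_abs_of_norm_le hdiffbd hDint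
    simpa [Real.norm_eq_abs] using this
  -- evaluate the H-integral
  have hHiv : ∀ a b : ℝ, IntervalIntegrable Hf volume a b :=
    fun a b => hHcont.intervalIntegrable a b
  have hJ : ∫ s in (0:ℝ)..t₁, (Hf (t₂ - s) - Hf (t₁ - s)) =
      (∫ r in t₁..t₂, Hf r) - ∫ r in (0:ℝ)..(t₂ - t₁), Hf r := by
    rw [intervalIntegral.integral_sub (hc2.intervalIntegrable 0 t₁)
      (hc1.intervalIntegrable 0 t₁)]
    rw [intervalIntegral.integral_comp_sub_left Hf t₂,
      intervalIntegral.integral_comp_sub_left Hf t₁]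
    simp only [sub_self, sub_zero]
    have e1 : (∫ r in (t₂ - t₁)..t₂, Hf r) =
        (∫ r in (0:ℝ)..t₂, Hf r) - ∫ r in (0:ℝ)..(t₂ - t₁), Hf r :=
      (intervalIntegral.integral_interval_sub_left (hHiv 0 t₂) (hHiv 0 (t₂ - t₁))).symm
    have e2 : (∫ r in (0:ℝ)..t₂, Hf r) - (∫ r in (0:ℝ)..t₁, Hf r) = ∫ r in t₁..t₂, Hf r :=
      intervalIntegral.integral_interval_sub_left (hHiv 0 t₂) (hHiv 0 t₁)
    rw [e1]
    linarith [e2]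
  have hJle : ∫ s in (0:ℝ)..t₁, (Hf (t₂ - s) - Hf (t₁ - s)) ≤ I * (t₂ - t₁) := by
    rw [hJ]
    have h1 : (∫ r in t₁..t₂, Hf r) ≤ ∫ _r in t₁..t₂, I :=
      intervalIntegral.integral_mono_on ht12 (hHiv t₁ t₂) intervalIntegrable_const
        (fun r hr => hHI r (le_trans ht₁ hr.1))
    have h2 : (0:ℝ) ≤ ∫ r in (0:ℝ)..(t₂ - t₁), Hf r :=
      intervalIntegral.integral_nonneg (by linarith) (fun r hr => hH0 r hr.1)
    simp only [intervalIntegral.integral_const, smul_eq_mul] at h1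
    linarith
  have hJnn : 0 ≤ ∫ s in (0:ℝ)..t₁, (Hf (t₂ - s) - Hf (t₁ - s)) := by
    refine intervalIntegral.integral_nonneg ht₁ (fun s hs => ?_)
    have := hHdiff (t₁ - s) (t₂ - s)
    have h3 : (0:ℝ) ≤ ∫ q in (t₁ - s)..(t₂ - s), |k'' q| :=
      intervalIntegral.integral_nonneg (by linarith) (fun q _ => abs_nonneg _)
    linarith
  have hT1 : |∫ s in (0:ℝ)..t₁, (G t₂ s - G t₁ s)| ≤ I * (t₂ - t₁) * Cφ := by
    refine hT1a.trans ?_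
    rw [intervalIntegral.integral_mul_const, abs_mul, abs_of_nonneg hCφnn,
      abs_of_nonneg hJnn]
    exact mul_le_mul_of_nonneg_right hJle hCφnn
  -- conclusion
  rw [hsplit]
  calc |(∫ s in (0:ℝ)..t₁, (G t₂ s - G t₁ s)) + ∫ s in t₁..t₂, G t₂ s|
      ≤ |∫ s in (0:ℝ)..t₁, (G t₂ s - G t₁ s)| + |∫ s in t₁..t₂, G t₂ s| := abs_add_le _ _
    _ ≤ I * (t₂ - t₁) * Cφ + (|k 0| + I) * Cφ * (t₂ - t₁) := add_le_add hT1 hT2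
    _ = (|k 0| + 2 * I) * ((eLpNorm φ 2 volume).toReal * A) * (t₂ - t₁) := by
        rw [hCφdef]; ring
    _ = (|k 0| + 2 * I) * (eLpNorm φ 2 volume).toReal * A * (t₂ - t₁) := by ring
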